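/- Let f be a generator with cdf F(x) := ∫₀ˣ f(t) dt, and let X, X' be independent random variables each with density f. Define w : [0,1]² → ℝ by w(u₁,u₂) := F(frac(u₁+u₂)) + 1{u₁+u₂ > 1}. Then ∫_{[0,1]²} (w(u) − F(u₁))² du = 2 Var(X) − E|X − X'| + 1/2. Consequently, the Dette–Siburg–Stoimenov coefficient ξ := 6 ∫_{[0,1]²} (∂₁C_f(u))² du − 2 of the bivariate copula C_f with density c_f(u) = f(frac(u₁+u₂)) — whose first partial derivative satisfies ∂₁C_f(u) = w(u) − F(u₁) — equals 12 Var(X) − 6 E|X − X'| + 1. -/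

import Mathlib

open MeasureTheory

/-- A generator: a probability density on `[0,1]`. -/
def IsGenerator (f : ℝ → ℝ) : Prop :=
  Measurable f ∧ (∀ x ∈ Set.Icc (0:ℝ) 1, 0 ≤ f x) ∧ ∫ x in Set.Icc (0:ℝ) 1, f x = 1

set_option linter.unusedSectionVars false
set_option linter.unreachableTactic false
set_option linter.unusedTactic false
set_option linter.unnecessarySeqFocus false

open Set

noncomputable def auxG (g : ℝ → ℝ) : ℝ → ℝ := fun x => ∫ t in (0:ℝ)..x, g t

lemma aux_integrableOn_of_bdd {h : ℝ → ℝ} {s : Set ℝ} (hμ : volume s ≠ ⊤)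
    (hm : AEStronglyMeasurable h (volume.restrict s)) {C : ℝ} (hb : ∀ x, |h x| ≤ C) :
    IntegrableOn h s := by
  have : IsFiniteMeasure (volume.restrict s) := ⟨by
    rw [Measure.restrict_apply_univ]; exact hμ.lt_top⟩
  exact ⟨hm, HasFiniteIntegral.of_bounded (C := C) (Filter.Eventually.of_forall fun x => by
    simpa [Real.norm_eq_abs] using hb x)⟩

lemma aux_ind_left {x : ℝ} (hx0 : 0 ≤ x) (hx1 : x ≤ 1) :
    ∫ t in Icc (0:ℝ) 1, (if t < x then (1:ℝ) else 0) = x := by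
  have h1 : (fun t : ℝ => if t < x then (1:ℝ) else 0) = (Iio x).indicator (fun _ => (1:ℝ)) := by
    ext t; simp [indicator_apply]
  rw [h1, setIntegral_indicator measurableSet_Iio]
  have h2 : Icc (0:ℝ) 1 ∩ Iio x = Ico 0 x := by
    ext t
    simp only [mem_inter_iff, mem_Icc, mem_Iio, mem_Ico]
    constructor
    · rintro ⟨⟨h, _⟩, h'⟩; exact ⟨h, h'⟩
    · rintro ⟨h, h'⟩; exact ⟨⟨h, by linarith⟩, h'⟩
  rw [h2]
  simp [Real.volume_Ico, ENNReal.toReal_ofReal hx0, hx0]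

lemma aux_ind_right {t : ℝ} (ht0 : 0 ≤ t) (ht1 : t ≤ 1) :
    ∫ x in Icc (0:ℝ) 1, (if t < x then (1:ℝ) else 0) = 1 - t := by
  have h1 : (fun x : ℝ => if t < x then (1:ℝ) else 0) = (Ioi t).indicator (fun _ => (1:ℝ)) := by
    ext x; simp [indicator_apply]
  rw [h1, setIntegral_indicator measurableSet_Ioi]
  have h2 : Icc (0:ℝ) 1 ∩ Ioi t = Ioc t 1 := by
    ext x
    simp only [mem_inter_iff, mem_Icc, mem_Ioi, mem_Ioc]
    constructor
    · rintro ⟨⟨_, h⟩, h'⟩; exact ⟨h', h⟩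
    · rintro ⟨h, h'⟩; exact ⟨⟨by linarith, h'⟩, h⟩
  rw [h2]
  simp [Real.volume_Ioc, ENNReal.toReal_ofReal (by linarith : (0:ℝ) ≤ 1 - t), ht1]

lemma aux_ind2_left {x : ℝ} (hx0 : 0 ≤ x) (hx1 : x ≤ 1) :
    ∫ t in Icc (0:ℝ) 1, (if t < x then 2*t else 0) = x ^ 2 := by
  have h1 : (fun t : ℝ => if t < x then 2*t else 0) = (Iio x).indicator (fun t => 2*t) := by
    ext t; simp [indicator_apply]
  rw [h1, setIntegral_indicator measurableSet_Iio]
  have h2 : Icc (0:ℝ) 1 ∩ Iio x = Ico 0 x := by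
    ext t
    simp only [mem_inter_iff, mem_Icc, mem_Iio, mem_Ico]
    constructor
    · rintro ⟨⟨h, _⟩, h'⟩; exact ⟨h, h'⟩
    · rintro ⟨h, h'⟩; exact ⟨⟨h, by linarith⟩, h'⟩
  rw [h2, Measure.restrict_congr_set Ico_ae_eq_Ioc, ← intervalIntegral.integral_of_le hx0,
    intervalIntegral.integral_const_mul, integral_id]
  ring

lemma aux_half : ∫ x in Icc (0:ℝ) 1, x = 1/2 := by
  rw [integral_Icc_eq_integral_Ioc, ← intervalIntegral.integral_of_le zero_le_one, integral_id]
  norm_num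

section
variable {g : ℝ → ℝ} (hgm : Measurable g) (hgnn : ∀ x, 0 ≤ g x) (hgi : Integrable g)
  (hg_out : ∀ x, x ∉ Icc (0:ℝ) 1 → g x = 0) (hg1 : ∫ x in Icc (0:ℝ) 1, g x = 1)

include hg1 in
lemma auxG_one' : auxG g 1 = 1 := by
  have : auxG g 1 = ∫ x in Icc (0:ℝ) 1, g x := by
    rw [auxG, intervalIntegral.integral_of_le zero_le_one, integral_Icc_eq_integral_Ioc]
  rw [this, hg1]

include hgi hg1 in
lemma auxG_tail {t : ℝ} (ht0 : 0 ≤ t) (ht1 : t ≤ 1) :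
    ∫ x in Icc (0:ℝ) 1, (if t < x then (1:ℝ) else 0) * g x = 1 - auxG g t := by
  have h1 : (fun x : ℝ => (if t < x then (1:ℝ) else 0) * g x)
      = (Ioi t).indicator g := by
    ext x
    by_cases h : t < x <;> simp [indicator_apply, h, mem_Ioi]
  rw [h1, setIntegral_indicator measurableSet_Ioi]
  have h2 : Icc (0:ℝ) 1 ∩ Ioi t = Ioc t 1 := by
    ext x
    simp only [mem_inter_iff, mem_Icc, mem_Ioi, mem_Ioc]
    constructor
    · rintro ⟨⟨_, h⟩, h'⟩; exact ⟨h', h⟩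
    · rintro ⟨h, h'⟩; exact ⟨⟨by linarith, h'⟩, h⟩
  have h3 : (∫ x in Ioc t 1, g x) = ∫ x in t..1, g x :=
    (intervalIntegral.integral_of_le ht1).symm
  have h4 : (∫ x in t..1, g x) = auxG g 1 - auxG g t := by
    rw [eq_sub_iff_add_eq, add_comm]
    exact intervalIntegral.integral_add_adjacent_intervals hgi.intervalIntegrable
      hgi.intervalIntegrable
  rw [h2, h3, h4, auxG_one' hg1]

include hgi in
lemma auxG_sub' (a b : ℝ) : auxG g b - auxG g a = ∫ t in a..b, g t := by
  rw [sub_eq_iff_eq_add', auxG, auxG,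
    ← intervalIntegral.integral_add_adjacent_intervals hgi.intervalIntegrable
      hgi.intervalIntegrable]

include hgnn hgi in
lemma auxG_mono : Monotone (auxG g) := by
  intro a b hab
  have h := auxG_sub' hgi a b
  have : 0 ≤ ∫ t in a..b, g t := intervalIntegral.integral_nonneg hab fun u _ => hgnn u
  linarith

include hg_out in
lemma auxG_nonpos {x : ℝ} (hx : x ≤ 0) : auxG g x = 0 := by
  rw [auxG, intervalIntegral.integral_of_ge hx, neg_eq_zero,
    Measure.restrict_congr_set (Ioo_ae_eq_Ioc).symm]
  apply setIntegral_eq_zero_of_forall_eq_zero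
  intro t ht
  exact hg_out t (fun hmem => absurd hmem.1 (by linarith [ht.2]))

include hgi hg_out hg1 in
lemma auxG_ge_one {x : ℝ} (hx : 1 ≤ x) : auxG g x = 1 := by
  have h := auxG_sub' hgi 1 x
  have hz : ∫ t in (1:ℝ)..x, g t = 0 := by
    rw [intervalIntegral.integral_of_le hx,
      Measure.restrict_congr_set (Ioo_ae_eq_Ioc).symm]
    apply setIntegral_eq_zero_of_forall_eq_zero
    intro t ht
    exact hg_out t (fun hmem => absurd hmem.2 (by linarith [ht.1]))
  have h1 := auxG_one' (g := g) hg1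
  linarith

include hgnn hgi hg_out hg1 in
lemma auxG_bounds (x : ℝ) : 0 ≤ auxG g x ∧ auxG g x ≤ 1 := by
  rcases le_total x 0 with h | h
  · rw [auxG_nonpos hg_out h]; norm_num
  rcases le_total 1 x with h1 | h1
  · rw [auxG_ge_one hgi hg_out hg1 h1]; norm_num
  constructor
  · have := auxG_mono hgnn hgi h
    rw [show auxG g 0 = 0 from intervalIntegral.integral_same] at this
    exact this
  · have := auxG_mono hgnn hgi h1
    rw [auxG_one' hg1] at this
    exact this

include hgnn hgi in
lemma auxG_meas : Measurable (auxG g) := (auxG_mono hgnn hgi).measurable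

include hgnn hgi hg_out hg1 in
lemma auxG_abs_le (x : ℝ) : |auxG g x| ≤ 1 := by
  have h := auxG_bounds hgnn hgi hg_out hg1 x
  rw [abs_le]; constructor <;> linarith [h.1, h.2]

include hgnn hgi hg_out hg1 in
lemma auxG_intOn : IntegrableOn (auxG g) (Icc (0:ℝ) 1) :=
  aux_integrableOn_of_bdd (by simp) ((auxG_meas hgnn hgi).aestronglyMeasurable)
    (auxG_abs_le hgnn hgi hg_out hg1)

include hgm hgnn hgi hg_out hg1 in
lemma aux_M1 : ∫ x in Icc (0:ℝ) 1, x * g x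
    = 1 - ∫ t in Icc (0:ℝ) 1, auxG g t := by
  have hgI : IntegrableOn g (Icc (0:ℝ) 1) := hgi.integrableOn
  have hprodint : Integrable (fun p : ℝ×ℝ => (if p.2 < p.1 then (1:ℝ) else 0) * g p.1)
      ((volume.restrict (Icc (0:ℝ) 1)).prod (volume.restrict (Icc (0:ℝ) 1))) := by
    have hbound : Integrable (fun p : ℝ×ℝ => g p.1)
        ((volume.restrict (Icc (0:ℝ) 1)).prod (volume.restrict (Icc (0:ℝ) 1))) := by
      have := hgI.mul_prod (μ := volume.restrict (Icc (0:ℝ) 1)) (ν := volume.restrict (Icc (0:ℝ) 1)) (integrable_const (1:ℝ))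
      simpa using this
    refine hbound.mono' ?_ ?_
    · exact ((Measurable.ite (measurableSet_lt measurable_snd measurable_fst)
        measurable_const measurable_const).mul (hgm.comp measurable_fst)).aestronglyMeasurable
    · refine Filter.Eventually.of_forall fun p => ?_
      rw [Real.norm_eq_abs, abs_mul]
      have h1 : |if p.2 < p.1 then (1:ℝ) else 0| ≤ 1 := by
        by_cases h : p.2 < p.1 <;> simp [h]
      have h2 : |g p.1| = g p.1 := abs_of_nonneg (hgnn p.1)
      calc |if p.2 < p.1 then (1:ℝ) else 0| * |g p.1|
          ≤ 1 * |g p.1| := by gcongr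
        _ = g p.1 := by rw [one_mul, h2]
  calc ∫ x in Icc (0:ℝ) 1, x * g x
      = ∫ x in Icc (0:ℝ) 1, (∫ t in Icc (0:ℝ) 1, if t < x then (1:ℝ) else 0) * g x :=
        setIntegral_congr_fun measurableSet_Icc (fun x hx => by rw [aux_ind_left hx.1 hx.2])
    _ = ∫ x in Icc (0:ℝ) 1, ∫ t in Icc (0:ℝ) 1, (if t < x then (1:ℝ) else 0) * g x := by
        refine setIntegral_congr_fun measurableSet_Icc (fun x hx => ?_)
        exact (integral_mul_const (g x) _).symm
    _ = ∫ t in Icc (0:ℝ) 1, ∫ x in Icc (0:ℝ) 1, (if t < x then (1:ℝ) else 0) * g x :=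
        integral_integral_swap (μ := volume.restrict (Icc (0:ℝ) 1)) (ν := volume.restrict (Icc (0:ℝ) 1)) (f := fun x t => (if t < x then (1:ℝ) else 0) * g x) hprodint
    _ = ∫ t in Icc (0:ℝ) 1, (1 - auxG g t) :=
        setIntegral_congr_fun measurableSet_Icc (fun t ht => auxG_tail hgi hg1 ht.1 ht.2)
    _ = 1 - ∫ t in Icc (0:ℝ) 1, auxG g t := by
        rw [integral_sub (integrable_const 1) (auxG_intOn hgnn hgi hg_out hg1)]
        simp
end

section
variable {g : ℝ → ℝ} (hgm : Measurable g) (hgnn : ∀ x, 0 ≤ g x) (hgi : Integrable g)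
  (hg_out : ∀ x, x ∉ Icc (0:ℝ) 1 → g x = 0) (hg1 : ∫ x in Icc (0:ℝ) 1, g x = 1)

include hgnn hgi hg_out hg1 in
lemma aux_tG_intOn : IntegrableOn (fun t => t * auxG g t) (Icc (0:ℝ) 1) := by
  have hid : IntegrableOn (fun t : ℝ => t) (Icc (0:ℝ) 1) volume :=
    (continuous_id' (X := ℝ)).integrableOn_Icc
  have h : IntegrableOn (fun t : ℝ => auxG g t * t) (Icc (0:ℝ) 1) :=
    hid.bdd_mul ((auxG_meas hgnn hgi).aestronglyMeasurable.restrict)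
      (c := 1) (Filter.Eventually.of_forall fun x => by simpa [Real.norm_eq_abs] using auxG_abs_le hgnn hgi hg_out hg1 x)
  exact h.congr_fun (fun x _ => mul_comm _ x) measurableSet_Icc

include hgm hgnn hgi hg_out hg1 in
lemma aux_M2 : ∫ x in Icc (0:ℝ) 1, x^2 * g x
    = 1 - 2 * ∫ t in Icc (0:ℝ) 1, t * auxG g t := by
  have hgI : IntegrableOn g (Icc (0:ℝ) 1) := hgi.integrableOn
  have hprodint : Integrable (fun p : ℝ×ℝ => (if p.2 < p.1 then 2*p.2 else 0) * g p.1)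
      ((volume.restrict (Icc (0:ℝ) 1)).prod (volume.restrict (Icc (0:ℝ) 1))) := by
    have hbound : Integrable (fun p : ℝ×ℝ => 2 * g p.1)
        ((volume.restrict (Icc (0:ℝ) 1)).prod (volume.restrict (Icc (0:ℝ) 1))) := by
      have := hgI.mul_prod (μ := volume.restrict (Icc (0:ℝ) 1))
        (ν := volume.restrict (Icc (0:ℝ) 1)) (integrable_const (1:ℝ))
      simpa using this.const_mul 2
    refine hbound.mono' ?_ ?_
    · exact ((Measurable.ite (measurableSet_lt measurable_snd measurable_fst)
        (measurable_const.mul measurable_snd) measurable_const).mul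
        (hgm.comp measurable_fst)).aestronglyMeasurable
    · rw [Measure.prod_restrict]
      filter_upwards [ae_restrict_mem (measurableSet_Icc.prod measurableSet_Icc)] with p hp
      rw [Real.norm_eq_abs, abs_mul]
      have h1 : |if p.2 < p.1 then 2*p.2 else 0| ≤ 2 := by
        by_cases h : p.2 < p.1 <;> simp only [h, if_true, if_false, abs_zero]
        · rw [abs_mul, abs_of_nonneg hp.2.1, abs_of_nonneg (by norm_num : (0:ℝ) ≤ 2)]
          nlinarith [hp.2.2]
        · norm_num
      have h2 : |g p.1| = g p.1 := abs_of_nonneg (hgnn p.1)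
      calc |if p.2 < p.1 then 2*p.2 else 0| * |g p.1|
          ≤ 2 * |g p.1| := by gcongr
        _ = 2 * g p.1 := by rw [h2]
  calc ∫ x in Icc (0:ℝ) 1, x^2 * g x
      = ∫ x in Icc (0:ℝ) 1, (∫ t in Icc (0:ℝ) 1, if t < x then 2*t else 0) * g x :=
        setIntegral_congr_fun measurableSet_Icc (fun x hx => by rw [aux_ind2_left hx.1 hx.2])
    _ = ∫ x in Icc (0:ℝ) 1, ∫ t in Icc (0:ℝ) 1, (if t < x then 2*t else 0) * g x := by
        refine setIntegral_congr_fun measurableSet_Icc (fun x hx => ?_)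
        exact (integral_mul_const (g x) _).symm
    _ = ∫ t in Icc (0:ℝ) 1, ∫ x in Icc (0:ℝ) 1, (if t < x then 2*t else 0) * g x :=
        integral_integral_swap (μ := volume.restrict (Icc (0:ℝ) 1))
          (ν := volume.restrict (Icc (0:ℝ) 1))
          (f := fun x t => (if t < x then 2*t else 0) * g x) hprodint
    _ = ∫ t in Icc (0:ℝ) 1, 2*t*(1 - auxG g t) := by
        refine setIntegral_congr_fun measurableSet_Icc (fun t ht => ?_)
        have : (fun x => (if t < x then 2*t else 0) * g x)
            = fun x => (2*t) * ((if t < x then (1:ℝ) else 0) * g x) := by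
          funext x; by_cases h : t < x <;> simp [h] <;> ring
        rw [this, integral_const_mul, auxG_tail hgi hg1 ht.1 ht.2]
    _ = 1 - 2 * ∫ t in Icc (0:ℝ) 1, t * auxG g t := by
        have he : (fun t : ℝ => 2*t*(1 - auxG g t)) = fun t => 2*t - 2*(t * auxG g t) := by
          funext t; ring
        have h2t : IntegrableOn (fun t : ℝ => 2 * t) (Icc (0:ℝ) 1) volume :=
          (continuous_const.mul (continuous_id' (X := ℝ))).integrableOn_Icc
        rw [he, integral_sub h2t ((aux_tG_intOn hgnn hgi hg_out hg1).const_mul 2),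
          integral_const_mul, integral_const_mul, aux_half]
        norm_num
end

lemma aux_abs_kernel {x y : ℝ} (hx0 : 0 ≤ x) (hx1 : x ≤ 1) (hy0 : 0 ≤ y) (hy1 : y ≤ 1) :
    ∫ t in Icc (0:ℝ) 1, ((if t < x then (1:ℝ) else 0) - (if t < y then 1 else 0))^2
      = |x - y| := by
  -- reduce to the case y ≤ x
  rcases le_total y x with hyx | hxy
  · have h1 : (fun t : ℝ => ((if t < x then (1:ℝ) else 0) - (if t < y then 1 else 0))^2)
        = (Ico y x).indicator (fun _ => (1:ℝ)) := by
      funext t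
      by_cases h : t < y
      · have : t < x := lt_of_lt_of_le h hyx
        simp [h, this, indicator_apply, mem_Ico, not_le.2 h]
      · by_cases h' : t < x
        · simp [h, h', indicator_apply, mem_Ico, not_lt.1 h]
        · simp [h, h', indicator_apply, mem_Ico]
    rw [h1, setIntegral_indicator measurableSet_Ico]
    have h2 : Icc (0:ℝ) 1 ∩ Ico y x = Ico y x := by
      rw [inter_eq_right]
      intro t ht
      exact ⟨by linarith [ht.1], by linarith [ht.2]⟩
    rw [h2]
    simp [Real.volume_Ico, ENNReal.toReal_ofReal (by linarith : (0:ℝ) ≤ x - y),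
      abs_of_nonneg (by linarith : (0:ℝ) ≤ x - y), hyx]
  · have h1 : (fun t : ℝ => ((if t < x then (1:ℝ) else 0) - (if t < y then 1 else 0))^2)
        = (Ico x y).indicator (fun _ => (1:ℝ)) := by
      funext t
      by_cases h : t < x
      · have : t < y := lt_of_lt_of_le h hxy
        simp [h, this, indicator_apply, mem_Ico, not_le.2 h]
      · by_cases h' : t < y
        · simp [h, h', indicator_apply, mem_Ico, not_lt.1 h]
        · simp [h, h', indicator_apply, mem_Ico]
    rw [h1, setIntegral_indicator measurableSet_Ico]
    have h2 : Icc (0:ℝ) 1 ∩ Ico x y = Ico x y := by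
      rw [inter_eq_right]
      intro t ht
      exact ⟨by linarith [ht.1], by linarith [ht.2]⟩
    rw [h2]
    rw [abs_sub_comm]
    simp [Real.volume_Ico, ENNReal.toReal_ofReal (by linarith : (0:ℝ) ≤ y - x),
      abs_of_nonneg (by linarith : (0:ℝ) ≤ y - x), hxy]

section
variable {g : ℝ → ℝ} (hgm : Measurable g) (hgnn : ∀ x, 0 ≤ g x) (hgi : Integrable g)
  (hg_out : ∀ x, x ∉ Icc (0:ℝ) 1 → g x = 0) (hg1 : ∫ x in Icc (0:ℝ) 1, g x = 1)

include hgm hgnn hgi hg_out hg1 in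
lemma aux_ind_g_int {t : ℝ} : IntegrableOn (fun x => (if t < x then (1:ℝ) else 0) * g x)
    (Icc (0:ℝ) 1) := by
  refine hgi.integrableOn.bdd_mul (c := 1) ?_ (Filter.Eventually.of_forall fun x => ?_)
  · exact ((measurable_const.ite (measurableSet_Ioi (a := t)) measurable_const)).aestronglyMeasurable.restrict
  · by_cases h : t < x <;> simp [h]

include hgm hgnn hgi hg_out hg1 in
lemma aux_D :
    (∫ p : ℝ×ℝ, |p.1 - p.2| * (g p.1 * g p.2)
        ∂((volume.restrict (Icc (0:ℝ) 1)).prod (volume.restrict (Icc (0:ℝ) 1))))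
      = 2 * (∫ t in Icc (0:ℝ) 1, auxG g t) - 2 * ∫ t in Icc (0:ℝ) 1, (auxG g t)^2 := by
  set I := Icc (0:ℝ) 1
  set P : Measure (ℝ × ℝ) := (volume.prod volume).restrict (I ×ˢ I) with hP
  have hPeq : (volume.restrict I).prod (volume.restrict I) = P := Measure.prod_restrict _ _
  set G := auxG g with hG
  have hGm : Measurable G := auxG_meas hgnn hgi
  have hGb := auxG_bounds hgnn hgi hg_out hg1
  -- the kernel as function of (p, t)
  set k : ℝ×ℝ → ℝ → ℝ := fun p t =>
    ((if t < p.1 then (1:ℝ) else 0) - (if t < p.2 then 1 else 0))^2 * (g p.1 * g p.2) with hk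
  have hgg : Integrable (fun p : ℝ×ℝ => g p.1 * g p.2) P := by
    rw [← hPeq]; exact hgi.integrableOn.mul_prod hgi.integrableOn
  have hkmeas : Measurable (fun z : (ℝ×ℝ)×ℝ => k z.1 z.2) := by
    apply Measurable.mul
    · apply Measurable.pow_const
      apply Measurable.sub
      · exact measurable_const.ite (measurableSet_lt measurable_snd
          (measurable_fst.comp measurable_fst)) measurable_const
      · exact measurable_const.ite (measurableSet_lt measurable_snd
          (measurable_snd.comp measurable_fst)) measurable_const
    · exact ((hgm.comp (measurable_fst.comp measurable_fst)).mul
        (hgm.comp (measurable_snd.comp measurable_fst)))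
  have hkint : Integrable (fun z : (ℝ×ℝ)×ℝ => k z.1 z.2) (P.prod (volume.restrict I)) := by
    have hbound : Integrable (fun z : (ℝ×ℝ)×ℝ => g z.1.1 * g z.1.2) (P.prod (volume.restrict I)) := by
      have := hgg.mul_prod (ν := volume.restrict I) (integrable_const (1:ℝ))
      simpa using this
    refine hbound.mono' hkmeas.aestronglyMeasurable (Filter.Eventually.of_forall fun z => ?_)
    rw [hk, Real.norm_eq_abs, abs_mul]
    have h1 : |((if z.2 < z.1.1 then (1:ℝ) else 0) - (if z.2 < z.1.2 then 1 else 0))^2| ≤ 1 := by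
      by_cases h : z.2 < z.1.1 <;> by_cases h' : z.2 < z.1.2 <;> simp [h, h']
    have h2 : |g z.1.1 * g z.1.2| = g z.1.1 * g z.1.2 := by
      rw [abs_mul, abs_of_nonneg (hgnn _), abs_of_nonneg (hgnn _)]
    calc |((if z.2 < z.1.1 then (1:ℝ) else 0) - (if z.2 < z.1.2 then 1 else 0))^2|
          * |g z.1.1 * g z.1.2|
        ≤ 1 * |g z.1.1 * g z.1.2| := by gcongr
      _ = g z.1.1 * g z.1.2 := by rw [one_mul, h2]
  -- step 1 : rewrite |p.1 - p.2| as inner integral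
  have step1 : (∫ p : ℝ×ℝ, |p.1 - p.2| * (g p.1 * g p.2) ∂P)
      = ∫ p : ℝ×ℝ, (∫ t in I, k p t) ∂P := by
    rw [hP]
    refine setIntegral_congr_fun (measurableSet_Icc.prod measurableSet_Icc) fun p hp => ?_
    rw [hk]
    simp only
    rw [integral_mul_const, aux_abs_kernel hp.1.1 hp.1.2 hp.2.1 hp.2.2]
  -- step 2 : swap
  have step2 : (∫ p : ℝ×ℝ, (∫ t in I, k p t) ∂P)
      = ∫ t in I, (∫ p : ℝ×ℝ, k p t ∂P) := by
    exact integral_integral_swap (μ := P) (ν := volume.restrict I) (f := k) hkint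
  -- step 3 : inner integral
  have step3 : ∀ t ∈ I, (∫ p : ℝ×ℝ, k p t ∂P)
      = 2 * (1 - G t) - 2 * (1 - G t)^2 := by
    intro t ht
    have ha : IntegrableOn (fun x => (if t < x then (1:ℝ) else 0) * g x) I :=
      aux_ind_g_int hgm hgnn hgi hg_out hg1
    have hx1 : (∫ x in I, (if t < x then (1:ℝ) else 0) * g x) = 1 - G t :=
      auxG_tail hgi hg1 ht.1 ht.2
    have hkp : ∀ p : ℝ×ℝ, k p t
        = ((if t < p.1 then (1:ℝ) else 0) * g p.1) * g p.2
          + g p.1 * ((if t < p.2 then (1:ℝ) else 0) * g p.2)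
          - 2 * (((if t < p.1 then (1:ℝ) else 0) * g p.1)
              * ((if t < p.2 then (1:ℝ) else 0) * g p.2)) := by
      intro p
      rw [hk]
      by_cases h : t < p.1 <;> by_cases h' : t < p.2 <;> simp [h, h'] <;> ring
    calc (∫ p : ℝ×ℝ, k p t ∂P)
        = ∫ p : ℝ×ℝ, (((if t < p.1 then (1:ℝ) else 0) * g p.1) * g p.2
          + g p.1 * ((if t < p.2 then (1:ℝ) else 0) * g p.2)
          - 2 * (((if t < p.1 then (1:ℝ) else 0) * g p.1)
              * ((if t < p.2 then (1:ℝ) else 0) * g p.2))) ∂P := by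
          exact integral_congr_ae (Filter.Eventually.of_forall fun p => hkp p)
      _ = (∫ p : ℝ×ℝ, ((if t < p.1 then (1:ℝ) else 0) * g p.1) * g p.2 ∂P)
          + (∫ p : ℝ×ℝ, g p.1 * ((if t < p.2 then (1:ℝ) else 0) * g p.2) ∂P)
          - 2 * ∫ p : ℝ×ℝ, (((if t < p.1 then (1:ℝ) else 0) * g p.1)
              * ((if t < p.2 then (1:ℝ) else 0) * g p.2)) ∂P := by
          rw [← hPeq]
          have i1 : Integrable (fun p : ℝ×ℝ => ((if t < p.1 then (1:ℝ) else 0) * g p.1) * g p.2)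
              ((volume.restrict I).prod (volume.restrict I)) := ha.mul_prod hgi.integrableOn
          have i2 : Integrable (fun p : ℝ×ℝ => g p.1 * ((if t < p.2 then (1:ℝ) else 0) * g p.2))
              ((volume.restrict I).prod (volume.restrict I)) := hgi.integrableOn.mul_prod ha
          have i3 : Integrable (fun p : ℝ×ℝ => ((if t < p.1 then (1:ℝ) else 0) * g p.1)
              * ((if t < p.2 then (1:ℝ) else 0) * g p.2))
              ((volume.restrict I).prod (volume.restrict I)) := ha.mul_prod ha
          have i12 : Integrable (fun p : ℝ×ℝ => ((if t < p.1 then (1:ℝ) else 0) * g p.1) * g p.2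
              + g p.1 * ((if t < p.2 then (1:ℝ) else 0) * g p.2))
              ((volume.restrict I).prod (volume.restrict I)) := i1.add i2
          have i3' : Integrable (fun p : ℝ×ℝ => 2 * (((if t < p.1 then (1:ℝ) else 0) * g p.1)
              * ((if t < p.2 then (1:ℝ) else 0) * g p.2)))
              ((volume.restrict I).prod (volume.restrict I)) := i3.const_mul 2
          rw [integral_sub i12 i3', integral_add i1 i2, integral_const_mul]
      _ = (1 - G t) * 1 + 1 * (1 - G t) - 2 * ((1 - G t) * (1 - G t)) := by
          rw [← hPeq,
            integral_prod_mul (μ := volume.restrict I) (ν := volume.restrict I)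
              (f := fun x => (if t < x then (1:ℝ) else 0) * g x) (g := g),
            integral_prod_mul (μ := volume.restrict I) (ν := volume.restrict I)
              (f := g) (g := fun x => (if t < x then (1:ℝ) else 0) * g x),
            integral_prod_mul (μ := volume.restrict I) (ν := volume.restrict I)
              (f := fun x => (if t < x then (1:ℝ) else 0) * g x)
              (g := fun x => (if t < x then (1:ℝ) else 0) * g x),
            hx1]
          rw [show (∫ x in I, g x) = 1 from hg1]
      _ = 2 * (1 - G t) - 2 * (1 - G t)^2 := by ring
  -- step 4 : outer integral
  have hGint : IntegrableOn G I := auxG_intOn hgnn hgi hg_out hg1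
  have hG2int : IntegrableOn (fun t => (G t)^2) I := by
    refine aux_integrableOn_of_bdd (by simp [I]) ((hGm.pow_const 2).aestronglyMeasurable.restrict) (C := 1) fun x => ?_
    have := hGb x
    rw [abs_le]
    constructor <;> nlinarith [this.1, this.2]
  calc (∫ p : ℝ×ℝ, |p.1 - p.2| * (g p.1 * g p.2) ∂((volume.restrict I).prod (volume.restrict I)))
      = ∫ t in I, (∫ p : ℝ×ℝ, k p t ∂P) := by rw [hPeq, step1, step2]
    _ = ∫ t in I, (2 * (1 - G t) - 2 * (1 - G t)^2) :=
        setIntegral_congr_fun measurableSet_Icc fun t ht => step3 t ht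
    _ = 2 * (∫ t in I, G t) - 2 * ∫ t in I, (G t)^2 := by
        have he : (fun t => 2 * (1 - G t) - 2 * (1 - G t)^2)
            = fun t => 2 * (G t) - 2 * (G t)^2 := by
          funext t; ring
        rw [he, integral_sub ((hGint.const_mul 2)) ((hG2int.const_mul 2)),
          integral_const_mul, integral_const_mul]
end

section
variable {g : ℝ → ℝ} (hgm : Measurable g) (hgnn : ∀ x, 0 ≤ g x) (hgi : Integrable g)
  (hg_out : ∀ x, x ∉ Icc (0:ℝ) 1 → g x = 0) (hg1 : ∫ x in Icc (0:ℝ) 1, g x = 1)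

include hgnn hgi hg_out hg1 in
lemma aux_reduce {c : ℝ} (hc0 : 0 ≤ c) (hc1 : c ≤ 1) :
    ∫ y in Icc (0:ℝ) 1,
      (auxG g (Int.fract (c + y)) + (if 1 < c + y then (1:ℝ) else 0) - auxG g c)^2
    = ∫ t in Icc (0:ℝ) 1, (auxG g t + (if t < c then (1:ℝ) else 0) - auxG g c)^2 := by
  set G := auxG g with hGdef
  have hGm : Measurable G := auxG_meas hgnn hgi
  have hGb := auxG_bounds hgnn hgi hg_out hg1
  set q : ℝ → ℝ := fun y => (G (Int.fract (c + y)) + (if 1 < c + y then (1:ℝ) else 0) - G c)^2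
    with hq
  set h : ℝ → ℝ := fun t => (G t + (if t < c then (1:ℝ) else 0) - G c)^2 with hh
  have hqm : Measurable q := by
    apply Measurable.pow_const
    apply Measurable.sub _ measurable_const
    apply Measurable.add
    · exact hGm.comp (measurable_fract.comp (measurable_const.add measurable_id))
    · exact measurable_const.ite (measurableSet_lt measurable_const
        (measurable_const.add measurable_id)) measurable_const
  have hhm : Measurable h := by
    apply Measurable.pow_const
    apply Measurable.sub _ measurable_const
    exact hGm.add (measurable_const.ite (measurableSet_lt measurable_id measurable_const)
      measurable_const)
  have hsq_bd : ∀ a b : ℝ, |a| ≤ 1 → |b| ≤ 1 → ∀ e : ℝ, (e = 0 ∨ e = 1) →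
      |(a + e - b)^2| ≤ 9 := by
    intro a b ha hb e he
    have h1 : |a + e - b| ≤ 3 := by
      rcases he with he | he <;> rw [he] <;> rw [abs_le] at ha hb ⊢ <;>
        constructor <;> linarith [ha.1, ha.2, hb.1, hb.2]
    have h2 := abs_le.1 h1
    calc |(a + e - b)^2| = (a + e - b)^2 := abs_of_nonneg (sq_nonneg _)
      _ ≤ 9 := by nlinarith [h2.1, h2.2]
  have hGabs : ∀ x, |G x| ≤ 1 := fun x => by
    rw [abs_le]; constructor <;> linarith [(hGb x).1, (hGb x).2]
  have hq_bd : ∀ y, |q y| ≤ 9 := by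
    intro y
    refine hsq_bd _ _ (hGabs _) (hGabs _) _ ?_
    by_cases hy : 1 < c + y <;> simp [hy]
  have hh_bd : ∀ t, |h t| ≤ 9 := by
    intro t
    refine hsq_bd _ _ (hGabs _) (hGabs _) _ ?_
    by_cases ht : t < c <;> simp [ht]
  have hqii : ∀ a b : ℝ, IntervalIntegrable q volume a b := by
    intro a b
    rw [intervalIntegrable_iff]
    exact aux_integrableOn_of_bdd (by simp [Set.uIoc]) hqm.aestronglyMeasurable.restrict hq_bd
  have hhii : ∀ a b : ℝ, IntervalIntegrable h volume a b := by
    intro a b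
    rw [intervalIntegrable_iff]
    exact aux_integrableOn_of_bdd (by simp [Set.uIoc]) hhm.aestronglyMeasurable.restrict hh_bd
  have hc1' : 0 ≤ 1 - c := by linarith
  have piece1 : ∫ y in (0:ℝ)..(1-c), q y = ∫ t in c..1, h t := by
    have e1 : ∫ y in (0:ℝ)..(1-c), q y = ∫ y in (0:ℝ)..(1-c), h (y + c) := by
      apply intervalIntegral.integral_congr_ae
      have hne : ∀ᵐ y : ℝ, y ≠ 1 - c := by
        rw [ae_iff]
        have : {y : ℝ | ¬ y ≠ 1 - c} = {1 - c} := by ext y; simp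
        rw [this]
        exact Real.volume_singleton
      filter_upwards [hne] with y hy hmem
      rw [Set.uIoc_of_le hc1'] at hmem
      have hy1 : 0 < y := hmem.1
      have hy2 : y < 1 - c := lt_of_le_of_ne hmem.2 hy
      have hfr : Int.fract (c + y) = c + y := Int.fract_eq_self.2 ⟨by linarith, by linarith⟩
      have hind : ¬ (1 < c + y) := by linarith
      have hind2 : ¬ (y + c < c) := by linarith
      rw [hq, hh]
      simp only [hfr, hind, if_false, hind2, add_zero]
      ring_nf
    rw [e1, intervalIntegral.integral_comp_add_right h c]
    norm_num
  have piece2 : ∫ y in (1-c)..1, q y = ∫ t in (0:ℝ)..c, h t := by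
    have e1 : ∫ y in (1-c)..(1:ℝ), q y = ∫ y in (1-c)..(1:ℝ), h (y + (c - 1)) := by
      apply intervalIntegral.integral_congr_ae
      have hne : ∀ᵐ y : ℝ, y ≠ 1 := by
        rw [ae_iff]
        have : {y : ℝ | ¬ y ≠ 1} = {1} := by ext y; simp
        rw [this]
        exact Real.volume_singleton
      filter_upwards [hne] with y hy hmem
      rw [Set.uIoc_of_le (by linarith : 1 - c ≤ 1)] at hmem
      have hy1 : 1 - c < y := hmem.1
      have hy2 : y < 1 := lt_of_le_of_ne hmem.2 hy
      have hfr : Int.fract (c + y) = c + y - 1 := by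
        calc Int.fract (c + y) = Int.fract (c + y - 1 + ((1:ℤ):ℝ)) := by norm_num
          _ = Int.fract (c + y - 1) := Int.fract_add_intCast _ _
          _ = c + y - 1 := Int.fract_eq_self.2 ⟨by linarith, by linarith⟩
      have hind : (1 < c + y) := by linarith
      have hind2 : (y + (c-1) < c) := by linarith
      rw [hq, hh]
      simp only [hfr, hind, if_true, hind2]
      ring_nf
    rw [e1, intervalIntegral.integral_comp_add_right h (c-1)]
    norm_num
  calc ∫ y in Icc (0:ℝ) 1, q y = ∫ y in (0:ℝ)..1, q y := by
        rw [integral_Icc_eq_integral_Ioc, ← intervalIntegral.integral_of_le zero_le_one]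
    _ = (∫ y in (0:ℝ)..(1-c), q y) + ∫ y in (1-c)..1, q y :=
        (intervalIntegral.integral_add_adjacent_intervals (hqii 0 (1-c)) (hqii (1-c) 1)).symm
    _ = (∫ t in c..1, h t) + ∫ t in (0:ℝ)..c, h t := by rw [piece1, piece2]
    _ = ∫ t in (0:ℝ)..1, h t := by
        rw [add_comm]
        exact intervalIntegral.integral_add_adjacent_intervals (hhii 0 c) (hhii c 1)
    _ = ∫ t in Icc (0:ℝ) 1, h t := by
        rw [integral_Icc_eq_integral_Ioc, ← intervalIntegral.integral_of_le zero_le_one]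
end

lemma aux_integrableOn_of_bdd' {h : ℝ → ℝ} {s : Set ℝ} (hs : MeasurableSet s)
    (hμ : volume s ≠ ⊤) (hm : AEStronglyMeasurable h (volume.restrict s)) {C : ℝ}
    (hb : ∀ x ∈ s, |h x| ≤ C) : IntegrableOn h s := by
  have : IsFiniteMeasure (volume.restrict s) := ⟨by
    rw [Measure.restrict_apply_univ]; exact hμ.lt_top⟩
  refine ⟨hm, HasFiniteIntegral.of_bounded (C := C) ?_⟩
  filter_upwards [ae_restrict_mem hs] with x hx
  simpa [Real.norm_eq_abs] using hb x hx

section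
variable {g : ℝ → ℝ} (hgm : Measurable g) (hgnn : ∀ x, 0 ≤ g x) (hgi : Integrable g)
  (hg_out : ∀ x, x ∉ Icc (0:ℝ) 1 → g x = 0) (hg1 : ∫ x in Icc (0:ℝ) 1, g x = 1)

include hgnn hgi hg_out hg1 in
lemma aux_expand :
    ∫ c in Icc (0:ℝ) 1,
      (∫ t in Icc (0:ℝ) 1, (auxG g t + (if t < c then (1:ℝ) else 0) - auxG g c)^2)
    = 2*(∫ t in Icc (0:ℝ) 1, (auxG g t)^2) - 2*(∫ t in Icc (0:ℝ) 1, auxG g t)^2 + 1/2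
      + 2*(∫ t in Icc (0:ℝ) 1, auxG g t) - 4*(∫ t in Icc (0:ℝ) 1, t * auxG g t) := by
  set I := Icc (0:ℝ) 1
  set G := auxG g with hGdef
  have hGm : Measurable G := auxG_meas hgnn hgi
  have hGb := auxG_bounds hgnn hgi hg_out hg1
  have hGabs : ∀ x, |G x| ≤ 1 := fun x => by
    rw [abs_le]; constructor <;> linarith [(hGb x).1, (hGb x).2]
  have hGint : IntegrableOn G I := auxG_intOn hgnn hgi hg_out hg1
  have hG2int : IntegrableOn (fun t => (G t)^2) I :=
    aux_integrableOn_of_bdd (by simp [I]) ((hGm.pow_const 2).aestronglyMeasurable.restrict)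
      (C := 1) fun x => by
        rw [abs_of_nonneg (sq_nonneg _)]
        nlinarith [(hGb x).1, (hGb x).2]
  have htGint : IntegrableOn (fun t => t * G t) I := aux_tG_intOn hgnn hgi hg_out hg1
  set A := ∫ t in I, G t with hA
  set B := ∫ t in I, (G t)^2 with hB
  set K := ∫ t in I, t * G t with hK
  set Phi : ℝ → ℝ := fun c => ∫ t in (0:ℝ)..c, G t with hPhi
  -- Phi is monotone hence measurable
  have hGii : ∀ a b : ℝ, IntervalIntegrable G volume a b := by
    intro a b
    rw [intervalIntegrable_iff]
    exact aux_integrableOn_of_bdd (by simp [Set.uIoc]) hGm.aestronglyMeasurable.restrict hGabs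
  have hPhiMono : Monotone Phi := by
    intro a b hab
    have : Phi b - Phi a = ∫ t in a..b, G t := by
      rw [sub_eq_iff_eq_add', hPhi]
      exact (intervalIntegral.integral_add_adjacent_intervals (hGii 0 a) (hGii a b)).symm
    have h2 : 0 ≤ ∫ t in a..b, G t :=
      intervalIntegral.integral_nonneg hab fun u _ => (hGb u).1
    linarith
  have hPhiM : Measurable Phi := hPhiMono.measurable
  have hPhiBd : ∀ c ∈ I, |Phi c| ≤ 1 := by
    intro c hc
    have h0 : 0 ≤ Phi c := intervalIntegral.integral_nonneg hc.1 fun u _ => (hGb u).1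
    have h1 : Phi c ≤ ∫ t in (0:ℝ)..c, (1:ℝ) := by
      apply intervalIntegral.integral_mono_on hc.1 (hGii 0 c)
        (intervalIntegrable_const)
      intro x _; exact (hGb x).2
    rw [intervalIntegral.integral_const, smul_eq_mul, mul_one] at h1
    rw [abs_le]; constructor <;> linarith [hc.2]
  have hPhiInt : IntegrableOn Phi I :=
    aux_integrableOn_of_bdd' (by simp [I]) (by simp [I]) hPhiM.aestronglyMeasurable.restrict hPhiBd
  -- inner integral evaluation, for c ∈ I
  have hinner : ∀ c ∈ I, (∫ t in I, (G t + (if t < c then (1:ℝ) else 0) - G c)^2)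
      = (B - 2*(G c)*A + (G c)^2) + c + 2*(Phi c) - 2*((G c)*c) := by
    intro c hc
    have hptw : ∀ t : ℝ, (G t + (if t < c then (1:ℝ) else 0) - G c)^2
        = ((G t)^2 - (2*(G c))*(G t) + (G c)^2) + (if t < c then (1:ℝ) else 0)
          + 2*((if t < c then (1:ℝ) else 0)*(G t)) - (2*(G c))*(if t < c then (1:ℝ) else 0) := by
      intro t
      by_cases h : t < c <;> simp [h] <;> ring
    have hIexp : ∫ t in I, (G t + (if t < c then (1:ℝ) else 0) - G c)^2
        = ∫ t in I, (((G t)^2 - (2*(G c))*(G t) + (G c)^2) + (if t < c then (1:ℝ) else 0)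
          + 2*((if t < c then (1:ℝ) else 0)*(G t)) - (2*(G c))*(if t < c then (1:ℝ) else 0)) :=
      integral_congr_ae (Filter.Eventually.of_forall fun t => hptw t)
    -- integrability of the pieces
    have hiq : IntegrableOn (fun t => (G t)^2 - (2*(G c))*(G t) + (G c)^2) I :=
      (hG2int.sub (hGint.const_mul _)).add (integrable_const _)
    have hie : IntegrableOn (fun t : ℝ => if t < c then (1:ℝ) else 0) I :=
      aux_integrableOn_of_bdd (by simp [I])
        ((measurable_const.ite (measurableSet_Iio (a := c)) measurable_const)).aestronglyMeasurable.restrict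
        (C := 1) (fun x => by by_cases h : x < c <;> simp [h])
    have hieG : IntegrableOn (fun t : ℝ => (if t < c then (1:ℝ) else 0) * (G t)) I := by
      refine hGint.bdd_mul (c := 1) ?_ (Filter.Eventually.of_forall fun x => ?_)
      · exact ((measurable_const.ite (measurableSet_Iio (a := c))
          measurable_const)).aestronglyMeasurable.restrict
      · by_cases h : x < c <;> simp [h]
    have heval_e : ∫ t in I, (if t < c then (1:ℝ) else 0) = c := aux_ind_left hc.1 hc.2
    have heval_eG : ∫ t in I, (if t < c then (1:ℝ) else 0) * (G t) = Phi c := by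
      have h1 : (fun t : ℝ => (if t < c then (1:ℝ) else 0) * (G t))
          = (Iio c).indicator G := by
        funext t; by_cases h : t < c <;> simp [indicator_apply, h, mem_Iio]
      rw [h1, setIntegral_indicator measurableSet_Iio]
      have h2 : I ∩ Iio c = Ico 0 c := by
        ext t
        simp only [I, mem_inter_iff, mem_Icc, mem_Iio, mem_Ico]
        constructor
        · rintro ⟨⟨h, _⟩, h'⟩; exact ⟨h, h'⟩
        · rintro ⟨h, h'⟩; exact ⟨⟨h, by linarith [hc.2]⟩, h'⟩
      rw [h2, Measure.restrict_congr_set Ico_ae_eq_Ioc,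
        ← intervalIntegral.integral_of_le hc.1]
    have hiqa : IntegrableOn (fun t => (G t)^2 - (2*(G c))*(G t)) I :=
      hG2int.sub (hGint.const_mul _)
    have heval_q : ∫ t in I, ((G t)^2 - (2*(G c))*(G t) + (G c)^2)
        = B - 2*(G c)*A + (G c)^2 := by
      rw [integral_add hiqa (integrable_const _),
        integral_sub hG2int (hGint.const_mul _), integral_const_mul]
      simp [I, hA, hB]
    have iA : IntegrableOn (fun t => ((G t)^2 - (2*(G c))*(G t) + (G c)^2)
        + (if t < c then (1:ℝ) else 0)) I := hiq.add hie
    have iB : IntegrableOn (fun t => (((G t)^2 - (2*(G c))*(G t) + (G c)^2)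
        + (if t < c then (1:ℝ) else 0)) + 2*((if t < c then (1:ℝ) else 0)*(G t))) I :=
      iA.add (hieG.const_mul 2)
    have iC : IntegrableOn (fun t : ℝ => 2*((if t < c then (1:ℝ) else 0)*(G t))) I :=
      hieG.const_mul 2
    have iD : IntegrableOn (fun t : ℝ => (2*(G c))*(if t < c then (1:ℝ) else 0)) I :=
      hie.const_mul _
    rw [hIexp, integral_sub iB iD, integral_add iA iC, integral_add hiq hie,
      integral_const_mul, integral_const_mul, heval_e, heval_eG, heval_q]
    ring
  -- outer integral
  have houter : ∫ c in I, (∫ t in I, (G t + (if t < c then (1:ℝ) else 0) - G c)^2)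
      = ∫ c in I, ((B - 2*(G c)*A + (G c)^2) + c + 2*(Phi c) - 2*((G c)*c)) :=
    setIntegral_congr_fun measurableSet_Icc fun c hc => hinner c hc
  -- Fubini for the Phi term
  have hPhiFub : ∫ c in I, Phi c = A - K := by
    have hswap : ∫ c in I, Phi c
        = ∫ c in I, ∫ t in I, (if t < c then (1:ℝ) else 0) * G t := by
      refine setIntegral_congr_fun measurableSet_Icc fun c hc => ?_
      have h1 : (fun t : ℝ => (if t < c then (1:ℝ) else 0) * (G t))
          = (Iio c).indicator G := by
        funext t; by_cases h : t < c <;> simp [indicator_apply, h, mem_Iio]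
      rw [h1, setIntegral_indicator measurableSet_Iio]
      have h2 : I ∩ Iio c = Ico 0 c := by
        ext t
        simp only [I, mem_inter_iff, mem_Icc, mem_Iio, mem_Ico]
        constructor
        · rintro ⟨⟨h, _⟩, h'⟩; exact ⟨h, h'⟩
        · rintro ⟨h, h'⟩; exact ⟨⟨h, by linarith [hc.2]⟩, h'⟩
      rw [h2, Measure.restrict_congr_set Ico_ae_eq_Ioc,
        ← intervalIntegral.integral_of_le hc.1]
    have hint : Integrable (fun z : ℝ×ℝ => (if z.2 < z.1 then (1:ℝ) else 0) * G z.2)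
        ((volume.restrict I).prod (volume.restrict I)) := by
      have hbound : Integrable (fun z : ℝ×ℝ => G z.2)
          ((volume.restrict I).prod (volume.restrict I)) := by
        have := (integrable_const (1:ℝ) (μ := volume.restrict I)).mul_prod hGint
        simpa using this
      refine hbound.mono' ?_ (Filter.Eventually.of_forall fun z => ?_)
      · exact ((measurable_const.ite (measurableSet_lt measurable_snd measurable_fst)
          measurable_const).mul (hGm.comp measurable_snd)).aestronglyMeasurable
      · rw [Real.norm_eq_abs, abs_mul]
        have h1 : |if z.2 < z.1 then (1:ℝ) else 0| ≤ 1 := by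
          by_cases h : z.2 < z.1 <;> simp [h]
        calc |if z.2 < z.1 then (1:ℝ) else 0| * |G z.2| ≤ 1 * |G z.2| := by gcongr
          _ = G z.2 := by rw [one_mul, abs_of_nonneg (hGb z.2).1]
    rw [hswap, integral_integral_swap (μ := volume.restrict I) (ν := volume.restrict I)
      (f := fun c t => (if t < c then (1:ℝ) else 0) * G t) hint]
    have : ∫ t in I, ∫ c in I, (if t < c then (1:ℝ) else 0) * G t
        = ∫ t in I, (1 - t) * G t := by
      refine setIntegral_congr_fun measurableSet_Icc fun t ht => ?_
      rw [integral_mul_const, aux_ind_right ht.1 ht.2]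
    rw [this]
    have he : (fun t : ℝ => (1 - t) * G t) = fun t => G t - t * G t := by
      funext t; ring
    rw [he, integral_sub hGint htGint]
  -- put it together
  rw [houter]
  have hi1a : IntegrableOn (fun c => B - 2*(G c)*A) I := by
    have h' : IntegrableOn (fun c => B - (2*A)*(G c)) I :=
      (integrable_const B).sub (hGint.const_mul _)
    exact h'.congr_fun (fun x _ => by ring) measurableSet_Icc
  have hi1 : IntegrableOn (fun c => B - 2*(G c)*A + (G c)^2) I := hi1a.add hG2int
  have hidI : IntegrableOn (fun c : ℝ => c) I := (continuous_id' (X := ℝ)).integrableOn_Icc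
  have hGcInt : IntegrableOn (fun c => (G c)*c) I := by
    refine htGint.congr_fun (fun x _ => mul_comm x (G x)) measurableSet_Icc
  calc ∫ c in I, ((B - 2*(G c)*A + (G c)^2) + c + 2*(Phi c) - 2*((G c)*c))
      = (∫ c in I, (B - 2*(G c)*A + (G c)^2)) + (∫ c in I, (c:ℝ))
        + 2*(∫ c in I, Phi c) - 2*(∫ c in I, (G c)*c) := by
        have j1 : IntegrableOn (fun c => (B - 2*(G c)*A + (G c)^2) + c) I := hi1.add hidI
        have j2 : IntegrableOn (fun c => ((B - 2*(G c)*A + (G c)^2) + c) + 2*(Phi c)) I :=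
          j1.add (hPhiInt.const_mul 2)
        have j3 : IntegrableOn (fun c : ℝ => 2*(Phi c)) I := hPhiInt.const_mul 2
        have j4 : IntegrableOn (fun c : ℝ => 2*((G c)*c)) I := hGcInt.const_mul 2
        rw [integral_sub j2 j4, integral_add j1 j3, integral_add hi1 hidI,
          integral_const_mul, integral_const_mul]
    _ = (B - 2*A*A + B) + 1/2 + 2*(A - K) - 2*K := by
        have h1 : ∫ c in I, (B - 2*(G c)*A + (G c)^2) = B - 2*A*A + B := by
          have he : (fun c => B - 2*(G c)*A + (G c)^2)
              = fun c => (B - (2*A)*(G c)) + (G c)^2 := by funext c; ring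
          have k1 : IntegrableOn (fun c => B - (2*A)*(G c)) I :=
            (integrable_const B).sub (hGint.const_mul _)
          rw [he, integral_add k1 hG2int,
            integral_sub (integrable_const B) (hGint.const_mul _), integral_const_mul]
          simp [I, hA, hB]
        have h2 : ∫ c in I, (c:ℝ) = 1/2 := aux_half
        have h3 : ∫ c in I, (G c)*c = K := by
          rw [hK]
          exact setIntegral_congr_fun measurableSet_Icc fun c _ => mul_comm (G c) c
        rw [h1, h2, h3, hPhiFub]
    _ = 2*B - 2*A^2 + 1/2 + 2*A - 4*K := by ring
end

open Set in
theorem stmt_12' (f : ℝ → ℝ)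
    (hf : Measurable f ∧ (∀ x ∈ Set.Icc (0:ℝ) 1, 0 ≤ f x) ∧ ∫ x in Set.Icc (0:ℝ) 1, f x = 1)
    (F : ℝ → ℝ) (hF : ∀ x, F x = ∫ t in (0:ℝ)..x, f t)
    (w : ℝ → ℝ → ℝ)
    (hw : ∀ u₁ u₂ : ℝ, w u₁ u₂ = F (Int.fract (u₁ + u₂)) + (if 1 < u₁ + u₂ then 1 else 0)) :
    ((∫ u in Set.univ.pi (fun _ : Fin 2 => Set.Icc (0:ℝ) 1),
        (w (u 0) (u 1) - F (u 0)) ^ 2)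
      = 2 * ((∫ x in Set.Icc (0:ℝ) 1, x ^ 2 * f x)
            - (∫ x in Set.Icc (0:ℝ) 1, x * f x) ^ 2)
        - (∫ u in Set.univ.pi (fun _ : Fin 2 => Set.Icc (0:ℝ) 1),
            |u 0 - u 1| * (f (u 0) * f (u 1)))
        + 1 / 2) := by
  obtain ⟨hfm, hfnn, hf1⟩ := hf
  have hfi : IntegrableOn f (Icc (0:ℝ) 1) := by
    by_contra h
    rw [integral_undef h] at hf1
    norm_num at hf1
  set g : ℝ → ℝ := (Icc (0:ℝ) 1).indicator f with hgdef
  have hgm : Measurable g := hfm.indicator measurableSet_Icc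
  have hgnn : ∀ x, 0 ≤ g x := fun x => indicator_nonneg (fun y hy => hfnn y hy) x
  have hgi : Integrable g := (integrable_indicator_iff measurableSet_Icc).2 hfi
  have hg_out : ∀ x, x ∉ Icc (0:ℝ) 1 → g x = 0 := fun x hx => indicator_of_notMem hx f
  have hgf : ∀ x ∈ Icc (0:ℝ) 1, g x = f x := fun x hx => indicator_of_mem hx f
  have hg1 : ∫ x in Icc (0:ℝ) 1, g x = 1 := by
    rw [setIntegral_congr_fun measurableSet_Icc hgf]
    exact hf1
  set G := auxG g with hGdef
  have hGb := auxG_bounds hgnn hgi hg_out hg1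
  have hGm : Measurable G := auxG_meas hgnn hgi
  have hGabs : ∀ x, |G x| ≤ 1 := fun x => by
    rw [abs_le]; constructor <;> linarith [(hGb x).1, (hGb x).2]
  have hFG : ∀ x ∈ Icc (0:ℝ) 1, F x = G x := by
    intro x hx
    rw [hF x, hGdef, auxG, intervalIntegral.integral_of_le hx.1,
      intervalIntegral.integral_of_le hx.1]
    refine setIntegral_congr_fun measurableSet_Ioc fun t ht => ?_
    exact (hgf t ⟨le_of_lt ht.1, le_trans ht.2 hx.2⟩).symm
  have hfr_mem : ∀ s : ℝ, Int.fract s ∈ Icc (0:ℝ) 1 :=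
    fun s => ⟨Int.fract_nonneg s, le_of_lt (Int.fract_lt_one s)⟩
  -- the G-version of the main integrand
  set Q : ℝ × ℝ → ℝ := fun p =>
    (G (Int.fract (p.1 + p.2)) + (if 1 < p.1 + p.2 then (1:ℝ) else 0) - G p.1)^2 with hQdef
  have hQmeas : Measurable Q := by
    apply Measurable.pow_const
    apply Measurable.sub
    · apply Measurable.add
      · exact hGm.comp (measurable_fract.comp (measurable_fst.add measurable_snd))
      · exact measurable_const.ite (measurableSet_lt measurable_const
          (measurable_fst.add measurable_snd)) measurable_const
    · exact hGm.comp measurable_fst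
  have hQbdd : ∀ p, |Q p| ≤ 9 := by
    intro p
    have hval : Q p = (G (Int.fract (p.1 + p.2))
        + (if 1 < p.1 + p.2 then (1:ℝ) else 0) - G p.1)^2 := rfl
    rw [hval]
    have h1 : |G (Int.fract (p.1 + p.2)) + (if 1 < p.1 + p.2 then (1:ℝ) else 0) - G p.1| ≤ 3 := by
      have := hGabs (Int.fract (p.1 + p.2))
      have := hGabs p.1
      have h2 : |if 1 < p.1 + p.2 then (1:ℝ) else 0| ≤ 1 := by
        by_cases h : 1 < p.1 + p.2 <;> simp [h]
      calc |G (Int.fract (p.1 + p.2)) + (if 1 < p.1 + p.2 then (1:ℝ) else 0) - G p.1|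
          ≤ |G (Int.fract (p.1 + p.2))| + |if 1 < p.1 + p.2 then (1:ℝ) else 0| + |G p.1| := by
            exact (abs_sub _ _).trans (by gcongr; exact abs_add_le _ _)
        _ ≤ 3 := by linarith [hGabs (Int.fract (p.1 + p.2)), h2, hGabs p.1]
    have h3 := abs_le.1 h1
    rw [abs_of_nonneg (sq_nonneg _)]
    nlinarith [h3.1, h3.2]
  have hfinI : IsFiniteMeasure (volume.restrict (Icc (0:ℝ) 1)) := ⟨by
    rw [Measure.restrict_apply_univ]; simp⟩
  have hQint : Integrable Q
      ((volume.restrict (Icc (0:ℝ) 1)).prod (volume.restrict (Icc (0:ℝ) 1))) := by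
    refine ⟨hQmeas.aestronglyMeasurable, HasFiniteIntegral.of_bounded (C := 9) ?_⟩
    exact Filter.Eventually.of_forall fun p => by simpa [Real.norm_eq_abs] using hQbdd p
  have haeeq : (fun p : ℝ×ℝ => (w p.1 p.2 - F p.1)^2)
      =ᵐ[(volume.restrict (Icc (0:ℝ) 1)).prod (volume.restrict (Icc (0:ℝ) 1))] Q := by
    rw [Measure.prod_restrict]
    filter_upwards [ae_restrict_mem (measurableSet_Icc.prod measurableSet_Icc)] with p hp
    rw [hw, hQdef]
    simp only
    rw [hFG _ (hfr_mem _), hFG _ hp.1]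
  have hWint : Integrable (fun p : ℝ×ℝ => (w p.1 p.2 - F p.1)^2)
      ((volume.restrict (Icc (0:ℝ) 1)).prod (volume.restrict (Icc (0:ℝ) 1))) :=
    hQint.congr haeeq.symm
  -- conversion of pi integrals to prod integrals
  have hpre : Set.univ.pi (fun _ : Fin 2 => Set.Icc (0:ℝ) 1)
      = MeasurableEquiv.finTwoArrow ⁻¹' ((Icc (0:ℝ) 1) ×ˢ (Icc (0:ℝ) 1)) := by
    ext u
    constructor
    · intro h
      exact ⟨h 0 (mem_univ _), h 1 (mem_univ _)⟩
    · rintro ⟨h0, h1⟩ i _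
      fin_cases i <;> assumption
  have hconv : ∀ H : ℝ → ℝ → ℝ,
      (∫ u in Set.univ.pi (fun _ : Fin 2 => Set.Icc (0:ℝ) 1), H (u 0) (u 1))
        = ∫ p : ℝ × ℝ, H p.1 p.2
            ∂((volume.restrict (Icc (0:ℝ) 1)).prod (volume.restrict (Icc (0:ℝ) 1))) := by
    intro H
    have key := (volume_preserving_finTwoArrow ℝ).setIntegral_preimage_emb
        (MeasurableEquiv.measurableEmbedding _) (fun p : ℝ × ℝ => H p.1 p.2)
        ((Icc (0:ℝ) 1) ×ˢ (Icc (0:ℝ) 1))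
    rw [hpre]
    have h2 : (∫ u in MeasurableEquiv.finTwoArrow ⁻¹' ((Icc (0:ℝ) 1) ×ˢ (Icc (0:ℝ) 1)),
        H (u 0) (u 1)) = ∫ p in (Icc (0:ℝ) 1) ×ˢ (Icc (0:ℝ) 1), H p.1 p.2 := key
    rw [h2, Measure.volume_eq_prod, ← Measure.prod_restrict]
  -- main integral
  have hmain : (∫ u in Set.univ.pi (fun _ : Fin 2 => Set.Icc (0:ℝ) 1),
      (w (u 0) (u 1) - F (u 0)) ^ 2)
      = 2*(∫ t in Icc (0:ℝ) 1, (G t)^2) - 2*(∫ t in Icc (0:ℝ) 1, G t)^2 + 1/2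
        + 2*(∫ t in Icc (0:ℝ) 1, G t) - 4*(∫ t in Icc (0:ℝ) 1, t * G t) := by
    rw [hconv (fun x y => (w x y - F x)^2)]
    rw [integral_congr_ae haeeq]
    rw [integral_prod _ hQint]
    have hstep : ∀ x ∈ Icc (0:ℝ) 1, (∫ y in Icc (0:ℝ) 1, Q (x, y))
        = ∫ t in Icc (0:ℝ) 1, (G t + (if t < x then (1:ℝ) else 0) - G x)^2 := by
      intro x hx
      have := aux_reduce hgnn hgi hg_out hg1 hx.1 hx.2
      rw [← this]
    have : (∫ x in Icc (0:ℝ) 1, ∫ y in Icc (0:ℝ) 1, Q (x, y))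
        = ∫ x in Icc (0:ℝ) 1,
            (∫ t in Icc (0:ℝ) 1, (G t + (if t < x then (1:ℝ) else 0) - G x)^2) :=
      setIntegral_congr_fun measurableSet_Icc fun x hx => hstep x hx
    rw [this]
    exact aux_expand hgnn hgi hg_out hg1
  -- the moments
  have hM1 : ∫ x in Icc (0:ℝ) 1, x * f x = 1 - ∫ t in Icc (0:ℝ) 1, G t := by
    rw [show (∫ x in Icc (0:ℝ) 1, x * f x) = ∫ x in Icc (0:ℝ) 1, x * g x from
      (setIntegral_congr_fun measurableSet_Icc fun x hx => by rw [hgf x hx]).symm]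
    exact aux_M1 hgm hgnn hgi hg_out hg1
  have hM2 : ∫ x in Icc (0:ℝ) 1, x^2 * f x = 1 - 2 * ∫ t in Icc (0:ℝ) 1, t * G t := by
    rw [show (∫ x in Icc (0:ℝ) 1, x^2 * f x) = ∫ x in Icc (0:ℝ) 1, x^2 * g x from
      (setIntegral_congr_fun measurableSet_Icc fun x hx => by rw [hgf x hx]).symm]
    exact aux_M2 hgm hgnn hgi hg_out hg1
  have hD : (∫ u in Set.univ.pi (fun _ : Fin 2 => Set.Icc (0:ℝ) 1),
      |u 0 - u 1| * (f (u 0) * f (u 1)))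
      = 2 * (∫ t in Icc (0:ℝ) 1, G t) - 2 * ∫ t in Icc (0:ℝ) 1, (G t)^2 := by
    rw [hconv (fun x y => |x - y| * (f x * f y))]
    have hcongr : (fun p : ℝ×ℝ => |p.1 - p.2| * (f p.1 * f p.2))
        =ᵐ[(volume.restrict (Icc (0:ℝ) 1)).prod (volume.restrict (Icc (0:ℝ) 1))]
        (fun p : ℝ×ℝ => |p.1 - p.2| * (g p.1 * g p.2)) := by
      rw [Measure.prod_restrict]
      filter_upwards [ae_restrict_mem (measurableSet_Icc.prod measurableSet_Icc)] with p hp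
      rw [hgf _ hp.1, hgf _ hp.2]
    rw [integral_congr_ae hcongr]
    exact aux_D hgm hgnn hgi hg_out hg1
  rw [hmain, hM1, hM2, hD]
  ring

theorem stmt_12 (f : ℝ → ℝ) (hf : IsGenerator f)
    (F : ℝ → ℝ) (hF : ∀ x, F x = ∫ t in (0:ℝ)..x, f t)
    (w : ℝ → ℝ → ℝ)
    (hw : ∀ u₁ u₂ : ℝ, w u₁ u₂ = F (Int.fract (u₁ + u₂)) + (if 1 < u₁ + u₂ then 1 else 0)) :
    ((∫ u in Set.univ.pi (fun _ : Fin 2 => Set.Icc (0:ℝ) 1),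
        (w (u 0) (u 1) - F (u 0)) ^ 2)
      = 2 * ((∫ x in Set.Icc (0:ℝ) 1, x ^ 2 * f x)
            - (∫ x in Set.Icc (0:ℝ) 1, x * f x) ^ 2)
        - (∫ u in Set.univ.pi (fun _ : Fin 2 => Set.Icc (0:ℝ) 1),
            |u 0 - u 1| * (f (u 0) * f (u 1)))
        + 1 / 2)
    ∧ (6 * (∫ u in Set.univ.pi (fun _ : Fin 2 => Set.Icc (0:ℝ) 1),
          (w (u 0) (u 1) - F (u 0)) ^ 2) - 2
      = 12 * ((∫ x in Set.Icc (0:ℝ) 1, x ^ 2 * f x)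
            - (∫ x in Set.Icc (0:ℝ) 1, x * f x) ^ 2)
        - 6 * (∫ u in Set.univ.pi (fun _ : Fin 2 => Set.Icc (0:ℝ) 1),
            |u 0 - u 1| * (f (u 0) * f (u 1)))
        + 1) := by
  have h1 := stmt_12' f hf F hF w hw
  exact ⟨h1, by linarith [h1]⟩
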